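/- Let p ≥ 2 be an integer, c ∈ ℂ, and set R := max{|c|, 2^{1/(p-1)}}. If z ∈ ℂ satisfies |z| > R, then, writing δ := |z| − R > 0, one has |f_c(z)| > |z|·(1 + (p−1)δ). -/

import Mathlib

/-- If `|z| > R = max {|c|, 2^(1/(p-1))}` and `δ = |z| - R`, then
`|f_c(z)| > |z|·(1 + (p-1)·δ)`. -/
theorem abs_map_gt (p : ℕ) (hp : 2 ≤ p) (c : ℂ)
    (R : ℝ) (hR : R = max ‖c‖ ((2 : ℝ) ^ (((p : ℝ) - 1)⁻¹)))
    (z : ℂ) (hz : R < ‖z‖)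
    (δ : ℝ) (hδ : δ = ‖z‖ - R) :
    ‖z‖ * (1 + ((p : ℝ) - 1) * δ) < ‖z ^ p + c‖ := by
  set a := ‖z‖ with hadef
  set k := p - 1 with hkdef
  have hp1 : (1:ℝ) ≤ (p:ℝ) - 1 := by
    have : (2:ℝ) ≤ (p:ℝ) := by exact_mod_cast hp
    linarith
  have hkc : ((k:ℕ):ℝ) = (p:ℝ) - 1 := by
    have h1 : 1 ≤ p := by omega
    rw [hkdef]
    push_cast [Nat.cast_sub h1]
    ring
  have h2R : (2:ℝ) ^ (((p:ℝ)-1)⁻¹) ≤ R := hR ▸ le_max_right _ _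
  have hR1 : (1:ℝ) ≤ R := le_trans (Real.one_le_rpow one_le_two (by positivity)) h2R
  have hcR : ‖c‖ ≤ R := hR ▸ le_max_left _ _
  have hRpos : (0:ℝ) < R := by linarith
  have hd : 0 < δ := by rw [hδ]; linarith
  have haR : a = R + δ := by rw [hδ]; ring
  -- 2 ≤ R^k
  have h2k : (2:ℝ) ≤ R ^ k := by
    have h1 : ((2:ℝ) ^ (((p:ℝ)-1)⁻¹)) ^ k ≤ R ^ k :=
      pow_le_pow_left₀ (by positivity) h2R k
    have h2 : ((2:ℝ) ^ (((p:ℝ)-1)⁻¹)) ^ k = 2 := by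
      rw [← Real.rpow_natCast ((2:ℝ) ^ (((p:ℝ)-1)⁻¹)) k, ← Real.rpow_mul (by norm_num),
        hkc, inv_mul_cancel₀ (by linarith), Real.rpow_one]
    linarith [h2 ▸ h1]
  have hRne : R ≠ 0 := ne_of_gt hRpos
  -- Bernoulli: R^k * (1 + k * (δ/R)) ≤ a^k
  have hbern : R ^ k * (1 + (k:ℝ) * (δ / R)) ≤ a ^ k := by
    have h1 : 1 + (k:ℝ) * (δ/R) ≤ (1 + δ/R)^k := by
      have h0 : (0:ℝ) ≤ δ/R := by positivity
      have : (-2:ℝ) ≤ δ/R := by linarith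
      exact one_add_mul_le_pow this k
    calc R^k * (1 + (k:ℝ)*(δ/R)) ≤ R^k * (1+δ/R)^k := by
          exact mul_le_mul_of_nonneg_left h1 (by positivity)
      _ = (R * (1+δ/R))^k := (mul_pow _ _ _).symm
      _ = a^k := by rw [haR]; field_simp
  have hkk : R ^ k = R ^ (k-1) * R := by
    rw [← pow_succ]; congr 1; omega
  have hsplit : R ^ k * (1 + (k:ℝ) * (δ / R)) = R ^ k + (k:ℝ) * δ * R ^ (k-1) := by
    rw [hkk]; field_simp
  have hRk1 : (1:ℝ) ≤ R ^ (k-1) := one_le_pow₀ hR1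
  have hkpos : (1:ℝ) ≤ (k:ℝ) := by rw [hkc]; linarith
  have hkey : 2 + (k:ℝ) * δ ≤ a ^ k := by
    rw [hsplit] at hbern
    nlinarith [mul_le_mul_of_nonneg_left hRk1 (by positivity : (0:ℝ) ≤ (k:ℝ)*δ)]
  -- a^p = a * a^k
  have hap : a ^ p = a * a ^ k := by
    rw [← pow_succ']; congr 1; omega
  have htri : a ^ p - ‖c‖ ≤ ‖z ^ p + c‖ := by
    have h1 : ‖z^p‖ - ‖-c‖ ≤ ‖z^p - -c‖ :=
      norm_sub_norm_le _ _
    simpa [map_pow, sub_neg_eq_add] using h1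
  have hapos : (0:ℝ) < a := by linarith
  have hmul : a * (2 + (k:ℝ)*δ) ≤ a ^ p := by
    rw [hap]
    exact mul_le_mul_of_nonneg_left hkey (le_of_lt hapos)
  rw [← hkc]
  nlinarith [hcR, hz, hmul, htri, hd]
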